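/- Let c, ε be positive real numbers with ε < c. Then there exists a positive constant d such that λ²/(2t) + t/2 − (2tλ − t²)^{1/2} ≤ (d/2)(t − λ)² for all t, λ in the interval [c+ε, 2c]. -/

import Mathlib

theorem stmt5 (c ε : ℝ) (hc : 0 < c) (hε : 0 < ε) (hεc : ε < c) :
    ∃ d : ℝ, 0 < d ∧
      ∀ t lam : ℝ, c + ε ≤ t → t ≤ 2 * c → c + ε ≤ lam → lam ≤ 2 * c →
        lam ^ 2 / (2 * t) + t / 2 - Real.sqrt (2 * t * lam - t ^ 2) ≤
          d / 2 * (t - lam) ^ 2 := by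
  refine ⟨32 / c, by positivity, ?_⟩
  intro t lam ht1 ht2 hl1 hl2
  have ht0 : 0 < t := by linarith
  have hnn : 0 ≤ 2 * t * lam - t ^ 2 := by nlinarith
  set B := Real.sqrt (2 * t * lam - t ^ 2) with hB
  have hB2 : B ^ 2 = 2 * t * lam - t ^ 2 := Real.sq_sqrt hnn
  have hBnn : 0 ≤ B := Real.sqrt_nonneg _
  have hDpos : 0 < lam ^ 2 + t ^ 2 + 2 * t * B := by nlinarith
  have hfac : (lam ^ 2 + t ^ 2 - 2 * t * B) * (lam ^ 2 + t ^ 2 + 2 * t * B)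
      = (t - lam) ^ 2 * (lam ^ 2 + 2 * t * lam + 5 * t ^ 2) := by
    linear_combination (-(4 * t ^ 2)) * hB2
  have h1 : c * (lam ^ 2 + 2 * t * lam + 5 * t ^ 2)
      ≤ 32 * t * (lam ^ 2 + t ^ 2 + 2 * t * B) := by
    nlinarith [mul_nonneg ht0.le hBnn, mul_pos hc hc, sq_nonneg (t - lam),
      mul_nonneg (mul_nonneg hc.le hc.le) hc.le]
  have h2 : c * (lam ^ 2 + t ^ 2 - 2 * t * B) * (lam ^ 2 + t ^ 2 + 2 * t * B)
      ≤ 32 * t * (t - lam) ^ 2 * (lam ^ 2 + t ^ 2 + 2 * t * B) := by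
    have : c * (lam ^ 2 + t ^ 2 - 2 * t * B) * (lam ^ 2 + t ^ 2 + 2 * t * B)
        = (t - lam) ^ 2 * (c * (lam ^ 2 + 2 * t * lam + 5 * t ^ 2)) := by
      linear_combination c * hfac
    rw [this]
    have := mul_le_mul_of_nonneg_left h1 (sq_nonneg (t - lam))
    nlinarith [this]
  have h3 : c * (lam ^ 2 + t ^ 2 - 2 * t * B) ≤ 32 * t * (t - lam) ^ 2 :=
    le_of_mul_le_mul_right h2 hDpos
  have heq : lam ^ 2 / (2 * t) + t / 2 - B
      = (lam ^ 2 + t ^ 2 - 2 * t * B) / (2 * t) := by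
    field_simp
  rw [heq]
  rw [div_le_iff₀ (by linarith : (0:ℝ) < 2 * t)]
  have : 32 / c / 2 * (t - lam) ^ 2 * (2 * t) = (32 * t * (t - lam) ^ 2) / c := by
    field_simp
  rw [this, le_div_iff₀ hc]
  nlinarith [h3]
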